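/- For any nonzero σ ∈ ℝ and any point (x,y,z) on the unit sphere with y ≠ 1, applying the pole-warp transformation f with parameter σ followed by f with parameter 1/σ returns the original point (x,y,z). -/

import Mathlib

noncomputable section

/-- Pole-warp transformation: `warp x y z σ = (x̂, ŷ, ẑ)`. -/
def warp (x y z σ : ℝ) : ℝ × ℝ × ℝ :=
  let xσ := σ * x / (1 - y)
  let zσ := σ * z / (1 - y)
  let δ := 2 / (1 + xσ ^ 2 + zσ ^ 2)
  (xσ * δ, 1 - δ, zσ * δ)

/-- Two-argument arctangent, `atan2 b a` is the argument of the point `(a, b)`. -/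
def atan2 (b a : ℝ) : ℝ := Complex.arg ⟨a, b⟩
theorem warp_inv (σ x y z : ℝ) (hσ : σ ≠ 0)
    (hsph : x ^ 2 + y ^ 2 + z ^ 2 = 1) (hy : y ≠ 1) :
    warp (warp x y z σ).1 (warp x y z σ).2.1 (warp x y z σ).2.2 (1 / σ) = (x, y, z) := by
  have hr : (1:ℝ) - y ≠ 0 := sub_ne_zero.mpr hy.symm
  have hxz : x ^ 2 + z ^ 2 = (1 - y) * (1 + y) := by nlinarith [hsph]
  have hD : (1 : ℝ) + (σ * x / (1 - y)) ^ 2 + (σ * z / (1 - y)) ^ 2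
      = ((1 - y) + σ ^ 2 * (1 + y)) / (1 - y) := by
    field_simp
    linear_combination σ ^ 2 * hxz
  have hpos : (0:ℝ) < 1 + (σ * x / (1 - y)) ^ 2 + (σ * z / (1 - y)) ^ 2 := by positivity
  have hDne : (1 : ℝ) + (σ * x / (1 - y)) ^ 2 + (σ * z / (1 - y)) ^ 2 ≠ 0 := hpos.ne'
  have hden : (1 - y) + σ ^ 2 * (1 + y) ≠ 0 := by
    intro h
    rw [hD, h, zero_div] at hpos
    exact lt_irrefl 0 hpos
  -- first warp simplified
  have h1 : warp x y z σ =
      (2 * σ * x / ((1 - y) + σ ^ 2 * (1 + y)),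
       1 - 2 * (1 - y) / ((1 - y) + σ ^ 2 * (1 + y)),
       2 * σ * z / ((1 - y) + σ ^ 2 * (1 + y))) := by
    simp only [warp]
    rw [hD]
    refine Prod.ext ?_ (Prod.ext ?_ ?_) <;> field_simp <;> ring
  rw [h1]
  simp only [warp]
  have h2 : (1:ℝ) - (1 - 2 * (1 - y) / ((1 - y) + σ ^ 2 * (1 + y)))
      = 2 * (1 - y) / ((1 - y) + σ ^ 2 * (1 + y)) := by ring
  rw [h2]
  have hxσ : 1 / σ * (2 * σ * x / ((1 - y) + σ ^ 2 * (1 + y))) /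
      (2 * (1 - y) / ((1 - y) + σ ^ 2 * (1 + y))) = x / (1 - y) := by
    field_simp
  have hzσ : 1 / σ * (2 * σ * z / ((1 - y) + σ ^ 2 * (1 + y))) /
      (2 * (1 - y) / ((1 - y) + σ ^ 2 * (1 + y))) = z / (1 - y) := by
    field_simp
  rw [hxσ, hzσ]
  have hD2 : (1:ℝ) + (x / (1 - y)) ^ 2 + (z / (1 - y)) ^ 2 = 2 / (1 - y) := by
    field_simp
    linear_combination hxz
  rw [hD2]
  have : (2:ℝ) / (2 / (1 - y)) = 1 - y := by
    field_simp
  rw [this]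
  refine Prod.ext ?_ (Prod.ext ?_ ?_) <;> field_simp <;> ring
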